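/- For integers s, t ≥ 1, m ≥ 1, and l ≥ 0, one has Σ_{m_1+m_2=m, m_1,m_2≥0} Σ_{|e|=m_2} ζ((s+m_1) ⊛ (((t+1) ⧢ ({2}^l))† ⊕ e)) − Σ_{m_1+m_2=m−1, m_1,m_2≥0} Σ_{|e|=m_2} ζ((s+m_1+1) ⊛ (((t+1) ⧢ ({2}^l))† ⊕ e)) = O_m((s) ⊛ ((t+1) ⧢ ({2}^l))†), where e runs over sequences of nonnegative integers of the appropriate depth with the indicated entry sum, and ⊕e is applied termwise. -/

import Mathlib

open scoped BigOperators

/-- The multiple zeta value of an index `k = (k₁, …, k_r)`: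
`ζ(k₁,…,k_r) = Σ_{1 ≤ m₁ < ⋯ < m_r} 1/(m₁^{k₁} ⋯ m_r^{k_r})`,
written as a `tsum` over strictly increasing tuples of positive integers. -/
noncomputable def mzv (k : List ℕ) : ℝ :=
  ∑' f : {f : Fin k.length → ℕ+ // StrictMono f},
    ∏ i : Fin k.length, (1 : ℝ) / (((f.1 i : ℕ) : ℝ) ^ (k.get i))

/-- Formal ℚ-linear combinations of indices. -/
abbrev IndexSum := List ℕ →₀ ℚ

/-- An index viewed as a formal sum. -/
noncomputable def ofIdx (k : List ℕ) : IndexSum := Finsupp.single k 1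

/-- ζ extended ℚ-linearly to formal sums of indices. -/
noncomputable def mzvL (x : IndexSum) : ℝ := x.sum fun k c => (c : ℝ) * mzv k

/-- The Ohno sum `O_m(k) = Σ_{|e| = m} ζ(k ⊕ e)`. -/
noncomputable def ohno (m : ℕ) (k : List ℕ) : ℝ :=
  ∑ e ∈ Finset.Nat.antidiagonalTuple k.length m,
    mzv (List.ofFn fun i : Fin k.length => k.get i + e i)

/-- The Ohno sum extended ℚ-linearly to formal sums of indices. -/
noncomputable def ohnoL (m : ℕ) (x : IndexSum) : ℝ := x.sum fun k c => (c : ℝ) * ohno m k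

/-- The multiset of shuffles of two lists. -/
def shuffles : List ℕ → List ℕ → Multiset (List ℕ)
  | [], l => {l}
  | a :: k, [] => {a :: k}
  | a :: k, b :: l =>
      ((shuffles k (b :: l)).map (a :: ·)) + ((shuffles (a :: k) l).map (b :: ·))
  termination_by k l => k.length + l.length

/-- The shuffle product of two indices, as a formal sum of indices. -/
noncomputable def shufL (k l : List ℕ) : IndexSum := ((shuffles k l).map ofIdx).sum

/-- The shuffle product, extended ℚ-bilinearly to formal sums of indices. -/
noncomputable def shuf (x y : IndexSum) : IndexSum :=
  x.sum fun k c => y.sum fun l d => (c * d) • shufL k l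

/-- Encoding of an index as a binary word: an entry `a` becomes the block
`false, true, …, true` with `a - 1` trues. -/
def encodeIdx (k : List ℕ) : List Bool := k.flatMap fun a => false :: List.replicate (a - 1) true

/-- Auxiliary decoder. -/
def decodeAux : List Bool → ℕ → List ℕ
  | [], n => [n]
  | false :: w, n => n :: decodeAux w 1
  | true :: w, n => decodeAux w (n + 1)

/-- Decoding of a binary word into an index. -/
def decodeIdx : List Bool → List ℕ
  | [] => []
  | _ :: w => decodeAux w 1

/-- The dual index `k†`: reverse the binary word of `k` and swap the letters. -/
def dualIdx (k : List ℕ) : List ℕ := decodeIdx (((encodeIdx k).reverse).map (fun b => !b))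

/-- Duality extended termwise to formal sums of indices. -/
noncomputable def dualL (x : IndexSum) : IndexSum := Finsupp.mapDomain dualIdx x

/-- `(a) ⊛ (l₁,…,l_r) = Σ_{i=1}^{r} (l₁,…,l_{i-1}, l_i + a, l_{i+1},…,l_r)`. -/
noncomputable def hastIdx (a : ℕ) (l : List ℕ) : IndexSum :=
  ∑ i : Fin l.length, Finsupp.single (l.set i (l.get i + a)) 1

/-- `⊛` extended ℚ-linearly in the second argument. -/
noncomputable def hast (a : ℕ) (x : IndexSum) : IndexSum := x.sum fun l c => c • hastIdx a l

/-- `Σ_{|e| = m} ζ((a) ⊛ (x ⊕ e))`, where for each index occurring in `x` the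
sequence `e` of nonnegative integers runs over the suitable depth (the depth of
that index) with entry sum `m`, and `⊕ e` is applied termwise. -/
noncomputable def zetaHastSum (a m : ℕ) (x : IndexSum) : ℝ :=
  x.sum fun k c => (c : ℝ) *
    ∑ e ∈ Finset.Nat.antidiagonalTuple k.length m,
      mzvL (hastIdx a (List.ofFn fun i : Fin k.length => k.get i + e i))

/-- Appending an entry `a` to each index occurring in a formal sum. -/
noncomputable def appendL (x : IndexSum) (a : ℕ) : IndexSum :=
  Finsupp.mapDomain (fun k => k ++ [a]) x

/-- `F_{m,l}(s; k) = O_m((s) ⧢ k ⧢ ({2}^l)) − O_m((s) ⧢ (k ⧢ ({2}^l))†)`. -/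
noncomputable def F (m l s : ℕ) (k : List ℕ) : ℝ :=
  ohnoL m (shuf (ofIdx [s]) (shufL k (List.replicate l 2)))
    - ohnoL m (shuf (ofIdx [s]) (dualL (shufL k (List.replicate l 2))))

/-- `D_{m,l}(s,t) = F_{m,l}(s;(t+1)) − F_{m,l}(t;(s+1))`. -/
noncomputable def D (m l s t : ℕ) : ℝ := F m l s [t + 1] - F m l t [s + 1]

section Aux

open Finsupp

lemma mzvL_zero : mzvL 0 = 0 := rfl

lemma mzvL_add (x y : IndexSum) : mzvL (x + y) = mzvL x + mzvL y :=
  Finsupp.sum_add_index' (fun _ => by simp) (fun _ c d => by push_cast; ring)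

lemma mzvL_single (k : List ℕ) (c : ℚ) : mzvL (Finsupp.single k c) = (c : ℝ) * mzv k :=
  Finsupp.sum_single_index (by simp)

lemma mzvL_finsetSum {ι : Type*} (S : Finset ι) (g : ι → IndexSum) :
    mzvL (∑ i ∈ S, g i) = ∑ i ∈ S, mzvL (g i) := by
  classical
  induction S using Finset.induction with
  | empty => simp [mzvL]
  | insert _ _ h ih => rw [Finset.sum_insert h, mzvL_add, ih, Finset.sum_insert h]

lemma ohnoL_zero (m : ℕ) : ohnoL m 0 = 0 := rfl

lemma ohnoL_add (m : ℕ) (x y : IndexSum) : ohnoL m (x + y) = ohnoL m x + ohnoL m y :=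
  Finsupp.sum_add_index' (fun _ => by simp) (fun _ c d => by push_cast; ring)

lemma ohnoL_single (m : ℕ) (k : List ℕ) (c : ℚ) :
    ohnoL m (Finsupp.single k c) = (c : ℝ) * ohno m k :=
  Finsupp.sum_single_index (by simp)

lemma ohnoL_finsetSum {ι : Type*} (m : ℕ) (S : Finset ι) (g : ι → IndexSum) :
    ohnoL m (∑ i ∈ S, g i) = ∑ i ∈ S, ohnoL m (g i) := by
  classical
  induction S using Finset.induction with
  | empty => simp [ohnoL]
  | insert _ _ h ih => rw [Finset.sum_insert h, ohnoL_add, ih, Finset.sum_insert h]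

lemma ohnoL_smul (m : ℕ) (c : ℚ) (y : IndexSum) : ohnoL m (c • y) = (c : ℝ) * ohnoL m y := by
  unfold ohnoL
  rw [Finsupp.sum_smul_index (fun k => by simp), Finsupp.mul_sum]
  exact Finsupp.sum_congr fun k _ => by push_cast [smul_eq_mul]; ring

lemma hast_single (a : ℕ) (k : List ℕ) (c : ℚ) :
    hast a (Finsupp.single k c) = c • hastIdx a k :=
  Finsupp.sum_single_index (by simp)

lemma hast_add (a : ℕ) (x y : IndexSum) : hast a (x + y) = hast a x + hast a y :=
  Finsupp.sum_add_index' (fun _ => by simp) (fun _ c d => add_smul c d _)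

lemma zetaHastSum_add (a m : ℕ) (x y : IndexSum) :
    zetaHastSum a m (x + y) = zetaHastSum a m x + zetaHastSum a m y :=
  Finsupp.sum_add_index' (fun _ => by simp) (fun _ c d => by push_cast; ring)

lemma ohno_len {k : List ℕ} {n : ℕ} (h : k.length = n) (m : ℕ) :
    ohno m k = ∑ e ∈ Finset.Nat.antidiagonalTuple n m,
      mzv (List.ofFn fun i : Fin n => k.get (Fin.cast h.symm i) + e i) := by
  subst h; rfl

lemma hastIdx_len {l : List ℕ} {n : ℕ} (h : l.length = n) (a : ℕ) :
    hastIdx a l = ∑ i : Fin n,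
      Finsupp.single (l.set i (l.get (Fin.cast h.symm i) + a)) 1 := by
  subst h; rfl

lemma ofFn_set' {n : ℕ} (f : Fin n → ℕ) (i : ℕ) (hi : i < n) (c : ℕ) :
    (List.ofFn f).set i c = List.ofFn (Function.update f ⟨i, hi⟩ c) := by
  apply List.ext_getElem
  · simp
  · intro j h1 h2
    simp only [List.getElem_set, List.getElem_ofFn, Function.update_apply, Fin.ext_iff]
    split_ifs
    all_goals first | rfl | omega

lemma hastIdx_ofFn {n : ℕ} (f : Fin n → ℕ) (a : ℕ) :
    hastIdx a (List.ofFn f) =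
      ∑ i : Fin n, Finsupp.single (List.ofFn (Function.update f i (f i + a))) 1 := by
  rw [hastIdx_len (List.length_ofFn (f := f))]
  refine Finset.sum_congr rfl fun i _ => ?_
  rw [ofFn_set' f i i.isLt]
  refine congrArg (fun u => Finsupp.single u 1) ?_
  apply List.ext_getElem
  · simp
  · intro j h1 h2
    simp only [List.getElem_ofFn, Function.update_apply, List.get_eq_getElem, Fin.coe_cast,
      Fin.ext_iff, Fin.eta]

lemma ohno_ofFn {n : ℕ} (f : Fin n → ℕ) (m : ℕ) :
    ohno m (List.ofFn f) = ∑ e ∈ Finset.Nat.antidiagonalTuple n m,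
      mzv (List.ofFn fun i => f i + e i) := by
  rw [ohno_len (List.length_ofFn (f := f))]
  refine Finset.sum_congr rfl fun e _ => ?_
  refine congrArg mzv ?_
  apply List.ext_getElem
  · simp
  · intro j h1 h2
    simp [List.get_eq_getElem]

lemma core (a m : ℕ) (k : List ℕ) :
    (∑ e ∈ Finset.Nat.antidiagonalTuple k.length m,
      mzvL (hastIdx a (List.ofFn fun i : Fin k.length => k.get i + e i)))
    = ohnoL m (hastIdx a k) := by
  have hk : hastIdx a k =
      ∑ i : Fin k.length,
        Finsupp.single (List.ofFn (Function.update k.get i (k.get i + a))) 1 := by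
    conv_lhs => rw [← List.ofFn_get k]
    exact hastIdx_ofFn _ _
  rw [hk, ohnoL_finsetSum]
  have hL : ∀ e : Fin k.length → ℕ,
      mzvL (hastIdx a (List.ofFn fun i : Fin k.length => k.get i + e i))
        = ∑ i : Fin k.length,
            mzv (List.ofFn (Function.update (fun j => k.get j + e j) i (k.get i + e i + a))) := by
    intro e
    rw [hastIdx_ofFn, mzvL_finsetSum]
    exact Finset.sum_congr rfl fun i _ => by rw [mzvL_single]; simp
  simp only [hL]
  rw [Finset.sum_comm]
  refine Finset.sum_congr rfl fun i _ => ?_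
  rw [ohnoL_single, ohno_ofFn, Rat.cast_one, one_mul]
  refine Finset.sum_congr rfl fun e _ => ?_
  refine congrArg mzv (congrArg List.ofFn ?_)
  funext j
  by_cases hj : j = i
  · subst hj; simp; omega
  · simp [Function.update_apply, hj]

end Aux

lemma stepB (a m : ℕ) (x : IndexSum) : zetaHastSum a m x = ohnoL m (hast a x) := by
  induction x using Finsupp.induction_linear with
  | zero => simp [zetaHastSum, hast, ohnoL]
  | add x y hx hy => rw [zetaHastSum_add, hast_add, ohnoL_add, hx, hy]
  | single k c =>
      rw [hast_single, ohnoL_smul, ← core a m k]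
      exact Finsupp.sum_single_index (by simp)


/-- For integers `s, t ≥ 1`, `m ≥ 1`, and `l ≥ 0`,
`Σ_{m₁+m₂=m} Σ_{|e|=m₂} ζ((s+m₁) ⊛ (((t+1) ⧢ ({2}^l))† ⊕ e))
  − Σ_{m₁+m₂=m−1} Σ_{|e|=m₂} ζ((s+m₁+1) ⊛ (((t+1) ⧢ ({2}^l))† ⊕ e))
  = O_m((s) ⊛ ((t+1) ⧢ ({2}^l))†)`. -/
theorem statement6 (s t m l : ℕ) (hs : 1 ≤ s) (ht : 1 ≤ t) (hm : 1 ≤ m) :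
    (∑ p ∈ Finset.HasAntidiagonal.antidiagonal m,
        zetaHastSum (s + p.1) p.2 (dualL (shufL [t + 1] (List.replicate l 2))))
      - ∑ p ∈ Finset.HasAntidiagonal.antidiagonal (m - 1),
          zetaHastSum (s + p.1 + 1) p.2 (dualL (shufL [t + 1] (List.replicate l 2)))
    = ohnoL m (hast s (dualL (shufL [t + 1] (List.replicate l 2)))) := by
  obtain ⟨n, rfl⟩ : ∃ n, m = n + 1 := ⟨m - 1, (Nat.succ_pred_eq_of_pos hm).symm⟩
  rw [Nat.add_sub_cancel, Finset.Nat.antidiagonal_succ, Finset.sum_cons, Finset.sum_map]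
  simp only [Function.Embedding.coe_prodMap, Function.Embedding.coeFn_mk,
    Function.Embedding.refl_apply, Prod.map_fst, Prod.map_snd, Nat.succ_eq_add_one,
    Nat.add_zero, ← Nat.add_assoc]
  rw [add_sub_cancel_right]
  exact stepB s (n + 1) _
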